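/- Let p be a prime, α > 2, b > 0, and define u : ℚ_p → ℝ by u(x) = b·((1 − p⁻¹)/(1 − p^{−α})·Ω(|x|_p) + |x|_p^{α−1}·(1 − Ω(|x|_p))). Set N = (1 − p^{−α})/(1 − p⁻¹) + (1 − p⁻¹)/(p^{α−2} − 1) and define f^{st} : ℚ_p → ℝ by f^{st}(x) = N^{−1}·((1 − p^{−α})/(1 − p⁻¹)·Ω(|x|_p) + |x|_p^{−α+1}·(1 − Ω(|x|_p))). Then (i) f^{st} is μ-integrable with ∫_{ℚ_p} f^{st}(x) dμ(x) = 1, and (ii) for every x ∈ ℚ_p the function y ↦ (u(y)f^{st}(y) − u(x)f^{st}(x))/|x − y|_p^{α+1} is μ-integrable with ∫_{ℚ_p} (u(y)f^{st}(y) − u(x)f^{st}(x))/|x − y|_p^{α+1} dμ(y) = 0; that is, f^{st} is the normalized stationary solution of the equation of p-adic random walk in the potential u. -/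

import Mathlib

open MeasureTheory
open scoped ENNReal

/-- `Ω(r) = 1` for `r ≤ 1` and `Ω(r) = 0` for `r > 1`. -/
noncomputable def Omega (r : ℝ) : ℝ := if r ≤ 1 then 1 else 0

section Aux

variable (p : ℕ) [Fact p.Prime]

lemma padic_ball_cover (k : ℕ) :
    Metric.closedBall (0:ℚ_[p]) ((p:ℝ)^(k+1)) =
      ⋃ j ∈ Finset.range p,
        Metric.closedBall ((j:ℚ_[p]) * ((p:ℚ_[p])^(k+1))⁻¹) ((p:ℝ)^k) := by
  have hp1 : (1:ℝ) < p := by exact_mod_cast (Fact.out : p.Prime).one_lt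
  have hp0 : (0:ℝ) < p := by linarith
  have hpi : ((p:ℚ_[p]) ^ (k+1)) ≠ 0 := by
    apply pow_ne_zero
    exact_mod_cast (Nat.cast_ne_zero (R := ℚ_[p])).mpr (Fact.out : p.Prime).ne_zero
  have hnormpow : ‖(p:ℚ_[p])^(k+1)‖ = ((p:ℝ)^(k+1))⁻¹ := by
    rw [Padic.norm_p_pow]
    rw [zpow_neg, zpow_natCast]
  have hnorminv : ‖((p:ℚ_[p])^(k+1))⁻¹‖ = (p:ℝ)^(k+1) := by
    rw [norm_inv, hnormpow, inv_inv]
  ext x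
  simp only [Metric.mem_closedBall, dist_zero_right, sub_zero, Set.mem_iUnion, Finset.mem_range,
    dist_eq_norm]
  constructor
  · intro hx
    have hz : ‖x * (p:ℚ_[p])^(k+1)‖ ≤ 1 := by
      rw [norm_mul, hnormpow]
      rw [← div_eq_mul_inv, div_le_one (by positivity)]
      exact hx
    set z : ℤ_[p] := ⟨x * (p:ℚ_[p])^(k+1), hz⟩ with hzdef
    refine ⟨z.appr 1, by simpa using z.appr_lt 1, ?_⟩
    have hspec := z.appr_spec 1
    rw [Ideal.mem_span_singleton] at hspec
    obtain ⟨w, hw⟩ := hspec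
    have hnw : ‖z - (z.appr 1 : ℤ_[p])‖ ≤ (p:ℝ)⁻¹ := by
      rw [hw, pow_one, norm_mul, PadicInt.norm_p]
      calc (p:ℝ)⁻¹ * ‖w‖ ≤ (p:ℝ)⁻¹ * 1 := by
            exact mul_le_mul_of_nonneg_left w.norm_le_one (by positivity)
        _ = (p:ℝ)⁻¹ := mul_one _
    have hq : ‖x * (p:ℚ_[p])^(k+1) - (z.appr 1 : ℚ_[p])‖ ≤ (p:ℝ)⁻¹ := by
      have : ((z - (z.appr 1 : ℤ_[p]) : ℤ_[p]) : ℚ_[p]) = x * (p:ℚ_[p])^(k+1) - (z.appr 1 : ℚ_[p]) := by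
        rw [PadicInt.coe_sub]
        rfl
      rw [← this]
      exact hnw
    have key : x - (z.appr 1 : ℚ_[p]) * ((p:ℚ_[p])^(k+1))⁻¹
        = (x * (p:ℚ_[p])^(k+1) - (z.appr 1 : ℚ_[p])) * ((p:ℚ_[p])^(k+1))⁻¹ := by
      field_simp
    rw [key, norm_mul, hnorminv]
    calc ‖x * (p:ℚ_[p])^(k+1) - (z.appr 1 : ℚ_[p])‖ * (p:ℝ)^(k+1)
        ≤ (p:ℝ)⁻¹ * (p:ℝ)^(k+1) := by
          exact mul_le_mul_of_nonneg_right hq (by positivity)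
      _ = (p:ℝ)^k := by
          rw [pow_succ]
          field_simp
  · rintro ⟨j, hj, hx⟩
    have hcj : ‖(j:ℚ_[p]) * ((p:ℚ_[p])^(k+1))⁻¹‖ ≤ (p:ℝ)^(k+1) := by
      rw [norm_mul, hnorminv]
      have : ‖(j:ℚ_[p])‖ ≤ 1 := by exact_mod_cast Padic.norm_int_le_one (j:ℤ)
      nlinarith [pow_pos hp0 (k+1)]
    have := Padic.nonarchimedean (x - (j:ℚ_[p]) * ((p:ℚ_[p])^(k+1))⁻¹)
      ((j:ℚ_[p]) * ((p:ℚ_[p])^(k+1))⁻¹)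
    simp only [sub_add_cancel] at this
    refine le_trans this (max_le (le_trans hx ?_) hcj)
    exact pow_le_pow_right₀ (le_of_lt hp1) (Nat.le_succ k)

lemma padic_ball_disj (k : ℕ) :
    Set.PairwiseDisjoint (Finset.range p : Set ℕ)
      (fun j => Metric.closedBall ((j:ℚ_[p]) * ((p:ℚ_[p])^(k+1))⁻¹) ((p:ℝ)^k)) := by
  have hp1 : (1:ℝ) < p := by exact_mod_cast (Fact.out : p.Prime).one_lt
  intro i hi j hj hij
  simp only [Finset.coe_range, Set.mem_Iio] at hi hj
  rw [Function.onFun, Set.disjoint_left]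
  intro x hxi hxj
  rw [Metric.mem_closedBall, dist_eq_norm] at hxi hxj
  have hnorminv : ‖((p:ℚ_[p])^(k+1))⁻¹‖ = (p:ℝ)^(k+1) := by
    rw [norm_inv, Padic.norm_p_pow, zpow_neg, zpow_natCast, inv_inv]
  have hd : ((i:ℤ) - j) ≠ 0 := by
    simpa [sub_eq_zero] using fun h => hij (by exact_mod_cast h)
  have hnd : ¬ ((p:ℤ) ∣ ((i:ℤ) - j)) := by
    intro hdvd
    have h1 : (p:ℤ) ≤ |(i:ℤ) - j| := Int.le_of_dvd (abs_pos.mpr hd) ((dvd_abs _ _).mpr hdvd)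
    have h2 : |(i:ℤ) - j| < p := abs_sub_lt_iff.mpr ⟨by omega, by omega⟩
    linarith
  have hnorm1 : ‖((i:ℚ_[p]) - j)‖ = 1 := by
    have hle : ‖((i:ℚ_[p]) - j)‖ ≤ 1 := by
      have : ((i:ℚ_[p]) - j) = (((i:ℤ) - (j:ℤ) : ℤ) : ℚ_[p]) := by push_cast; ring
      rw [this]; exact Padic.norm_int_le_one _
    have hlt : ¬ ‖((i:ℚ_[p]) - j)‖ < 1 := by
      have : ((i:ℚ_[p]) - j) = (((i:ℤ) - (j:ℤ) : ℤ) : ℚ_[p]) := by push_cast; ring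
      rw [this, Padic.norm_intCast_lt_one_iff]
      exact hnd
    linarith [lt_or_eq_of_le hle |>.resolve_left hlt ▸ le_refl (1:ℝ)]
  -- distance between centers
  have hcent : ‖(i:ℚ_[p]) * ((p:ℚ_[p])^(k+1))⁻¹ - (j:ℚ_[p]) * ((p:ℚ_[p])^(k+1))⁻¹‖ = (p:ℝ)^(k+1) := by
    rw [← sub_mul, norm_mul, hnorm1, hnorminv, one_mul]
  have := Padic.nonarchimedean
    ((i:ℚ_[p]) * ((p:ℚ_[p])^(k+1))⁻¹ - x) (x - (j:ℚ_[p]) * ((p:ℚ_[p])^(k+1))⁻¹)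
  rw [sub_add_sub_cancel] at this
  rw [hcent] at this
  have h1 : ‖(i:ℚ_[p]) * ((p:ℚ_[p])^(k+1))⁻¹ - x‖ ≤ (p:ℝ)^k := by
    rwa [← norm_neg, neg_sub]
  have hmax : max ‖(i:ℚ_[p]) * ((p:ℚ_[p])^(k+1))⁻¹ - x‖ ‖x - (j:ℚ_[p]) * ((p:ℚ_[p])^(k+1))⁻¹‖ ≤ (p:ℝ)^k :=
    max_le h1 hxj
  have : (p:ℝ)^(k+1) ≤ (p:ℝ)^k := le_trans this hmax
  have : (p:ℝ)^k < (p:ℝ)^(k+1) := pow_lt_pow_right₀ hp1 (Nat.lt_succ_self k)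
  linarith

lemma padic_measure_ball [MeasurableSpace ℚ_[p]] [BorelSpace ℚ_[p]]
    (μ : Measure ℚ_[p]) [μ.IsAddHaarMeasure]
    (hμ : μ (Metric.closedBall 0 1) = 1) :
    ∀ k : ℕ, μ (Metric.closedBall (0:ℚ_[p]) ((p:ℝ)^k)) = (p:ℝ≥0∞)^k := by
  intro k
  induction k with
  | zero => simpa using hμ
  | succ k ih =>
    rw [padic_ball_cover]
    rw [measure_biUnion_finset (padic_ball_disj p k)
      (fun j _ => measurableSet_closedBall)]
    have htrans : ∀ j : ℕ, μ (Metric.closedBall ((j:ℚ_[p]) * ((p:ℚ_[p])^(k+1))⁻¹) ((p:ℝ)^k))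
        = μ (Metric.closedBall (0:ℚ_[p]) ((p:ℝ)^k)) := by
      intro j
      set c : ℚ_[p] := (j:ℚ_[p]) * ((p:ℚ_[p])^(k+1))⁻¹
      have : Metric.closedBall c ((p:ℝ)^k) = (fun x => -c + x) ⁻¹' Metric.closedBall 0 ((p:ℝ)^k) := by
        ext x
        simp [Metric.mem_closedBall, dist_eq_norm, neg_add_eq_sub]
      rw [this, measure_preimage_add]
    simp only [htrans, ih, Finset.sum_const, Finset.card_range, nsmul_eq_mul]
    rw [pow_succ]
    ring

lemma padic_norm_annulus (x : ℚ_[p]) (k : ℕ) (h1 : ¬ ‖x‖ ≤ (p:ℝ)^k)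
    (h2 : ‖x‖ ≤ (p:ℝ)^(k+1)) : ‖x‖ = (p:ℝ)^(k+1) := by
  have hp1 : (1:ℝ) < p := by exact_mod_cast (Fact.out : p.Prime).one_lt
  push_neg at h1
  have hx0 : x ≠ 0 := by
    intro h
    rw [h, norm_zero] at h1
    have : (0:ℝ) < (p:ℝ)^k := by positivity
    linarith
  have hv := Padic.norm_eq_zpow_neg_valuation hx0
  set m : ℤ := -x.valuation with hm
  rw [hv] at h1 h2 ⊢
  have hk1 : (k:ℤ) < m := by
    have := (zpow_lt_zpow_iff_right₀ hp1).mp (by rwa [zpow_natCast] : (p:ℝ)^(k:ℤ) < (p:ℝ)^m)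
    exact this
  have hk2 : m ≤ (k:ℤ)+1 := by
    have h2' : (p:ℝ)^m ≤ (p:ℝ)^(((k+1:ℕ)):ℤ) := by rw [zpow_natCast]; exact h2
    have := (zpow_le_zpow_iff_right₀ hp1).mp h2'
    omega
  have hmk : m = (k:ℤ)+1 := le_antisymm hk2 (by omega)
  rw [hmk, show ((k:ℤ)+1) = ((k+1:ℕ):ℤ) by push_cast; ring, zpow_natCast]

lemma padic_norm_gt_one (x : ℚ_[p]) (h1 : ¬ ‖x‖ ≤ 1) :
    ∃ k : ℕ, ¬ ‖x‖ ≤ (p:ℝ)^k ∧ ‖x‖ ≤ (p:ℝ)^(k+1) := by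
  have hp1 : (1:ℝ) < p := by exact_mod_cast (Fact.out : p.Prime).one_lt
  push_neg at h1
  have hx0 : x ≠ 0 := by
    intro h; rw [h, norm_zero] at h1; linarith
  have hv := Padic.norm_eq_zpow_neg_valuation hx0
  set m : ℤ := -x.valuation with hm
  have hm1 : 1 ≤ m := by
    by_contra h
    push_neg at h
    have : (p:ℝ)^m ≤ (p:ℝ)^(0:ℤ) := (zpow_le_zpow_iff_right₀ hp1).mpr (by omega)
    rw [zpow_zero] at this
    rw [hv] at h1
    linarith
  refine ⟨(m-1).toNat, ?_, ?_⟩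
  · push_neg
    rw [hv, ← zpow_natCast (p:ℝ)]
    apply zpow_lt_zpow_right₀ hp1
    omega
  · rw [hv, ← zpow_natCast (p:ℝ)]
    apply (zpow_le_zpow_iff_right₀ hp1).mpr
    push_cast
    omega

end Aux

/-- for `α > 2`, `f^{st}` is the normalized stationary solution of the
equation of `p`-adic random walk in the power-law potential `u`. -/
theorem padic_stationary_solution
    (p : ℕ) [Fact p.Prime]
    [MeasurableSpace ℚ_[p]] [BorelSpace ℚ_[p]]
    (μ : Measure ℚ_[p]) [μ.IsAddHaarMeasure]
    (hμ : μ (Metric.closedBall 0 1) = 1)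
    (α b : ℝ) (hα : 2 < α) (hb : 0 < b)
    (u : ℚ_[p] → ℝ)
    (hu : ∀ x : ℚ_[p], u x =
      b * ((1 - (p : ℝ)⁻¹) / (1 - (p : ℝ) ^ (-α)) * Omega ‖x‖ +
        ‖x‖ ^ (α - 1) * (1 - Omega ‖x‖)))
    (N : ℝ)
    (hN : N = (1 - (p : ℝ) ^ (-α)) / (1 - (p : ℝ)⁻¹) +
      (1 - (p : ℝ)⁻¹) / ((p : ℝ) ^ (α - 2) - 1))
    (fst : ℚ_[p] → ℝ)
    (hfst : ∀ x : ℚ_[p], fst x =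
      N⁻¹ * ((1 - (p : ℝ) ^ (-α)) / (1 - (p : ℝ)⁻¹) * Omega ‖x‖ +
        ‖x‖ ^ (-α + 1) * (1 - Omega ‖x‖))) :
    (Integrable fst μ ∧ ∫ x : ℚ_[p], fst x ∂μ = 1) ∧
    ∀ x : ℚ_[p],
      Integrable
        (fun y : ℚ_[p] => (u y * fst y - u x * fst x) / ‖x - y‖ ^ (α + 1)) μ ∧
      ∫ y : ℚ_[p], (u y * fst y - u x * fst x) / ‖x - y‖ ^ (α + 1) ∂μ = 0 := by
  have hp1 : (1:ℝ) < p := by exact_mod_cast (Fact.out : p.Prime).one_lt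
  have hp0 : (0:ℝ) < p := by linarith
  have hPinv1 : (p:ℝ)⁻¹ < 1 := by
    rw [inv_lt_one_iff₀]; right; exact hp1
  have hPinv0 : (0:ℝ) < (p:ℝ)⁻¹ := by positivity
  have hpa1 : (p:ℝ) ^ (-α) < 1 := Real.rpow_lt_one_of_one_lt_of_neg hp1 (by linarith)
  have hpa0 : (0:ℝ) < (p:ℝ) ^ (-α) := Real.rpow_pos_of_pos hp0 _
  set A0 : ℝ := (1 - (p:ℝ) ^ (-α)) / (1 - (p:ℝ)⁻¹) with hA0def
  have hA0 : 0 < A0 := by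
    apply div_pos <;> linarith
  set s : ℝ := (p:ℝ) ^ (α - 2) with hsdef
  have hs1 : 1 < s := by
    rw [hsdef]
    exact Real.one_lt_rpow_iff_of_pos hp0 |>.mpr (Or.inl ⟨hp1, by linarith⟩)
  have hN0 : 0 < N := by
    rw [hN]
    have : (0:ℝ) < (1 - (p:ℝ)⁻¹) / (s - 1) := by apply div_pos <;> linarith
    have := hA0
    rw [hA0def] at this
    linarith
  -- the potential times the stationary density is constant
  have hconst : ∀ x : ℚ_[p], u x * fst x = b * N⁻¹ := by
    intro x
    rw [hu, hfst]
    by_cases h : ‖x‖ ≤ 1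
    · simp only [Omega, if_pos h]
      have h1 : (1:ℝ) - (p:ℝ)⁻¹ ≠ 0 := by linarith
      have h2 : (1:ℝ) - (p:ℝ) ^ (-α) ≠ 0 := by linarith
      have hmul : (1 - (p:ℝ)⁻¹) / (1 - (p:ℝ)^(-α)) * A0 = 1 := by
        rw [hA0def, div_mul_div_comm, div_eq_one_iff_eq (mul_ne_zero h2 h1)]
        ring
      calc b * ((1 - (p:ℝ)⁻¹) / (1 - (p:ℝ)^(-α)) * 1 + ‖x‖ ^ (α-1) * (1-1)) *
            (N⁻¹ * (A0 * 1 + ‖x‖ ^ (-α+1) * (1-1)))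
          = b * N⁻¹ * ((1 - (p:ℝ)⁻¹) / (1 - (p:ℝ)^(-α)) * A0) := by ring
        _ = b * N⁻¹ := by rw [hmul, mul_one]
    · simp only [Omega, if_neg h]
      push_neg at h
      have hx0 : (0:ℝ) < ‖x‖ := by linarith
      have : ‖x‖ ^ (α - 1) * ‖x‖ ^ (-α + 1) = 1 := by
        rw [← Real.rpow_add hx0]
        norm_num
      calc b * ((1 - (p:ℝ)⁻¹) / (1 - (p:ℝ) ^ (-α)) * 0 + ‖x‖ ^ (α-1) * (1-0)) *
          (N⁻¹ * ((1 - (p:ℝ) ^ (-α)) / (1 - (p:ℝ)⁻¹) * 0 + ‖x‖ ^ (-α+1) * (1-0)))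
          = b * N⁻¹ * (‖x‖ ^ (α-1) * ‖x‖ ^ (-α+1)) := by ring
        _ = b * N⁻¹ := by rw [this, mul_one]
  -- measurability of fst
  have hOm : Measurable (fun x : ℚ_[p] => Omega ‖x‖) := by
    unfold Omega
    exact Measurable.ite
      ((isClosed_le continuous_norm continuous_const).measurableSet)
      measurable_const measurable_const
  have hpow : Measurable (fun x : ℚ_[p] => ‖x‖ ^ (-α + 1)) := by fun_prop
  have hfm : Measurable fst := by
    have : fst = fun x => N⁻¹ * (A0 * Omega ‖x‖ + ‖x‖ ^ (-α + 1) * (1 - Omega ‖x‖)) :=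
      funext hfst
    rw [this]
    exact (((measurable_const.mul hOm).add
      (hpow.mul (measurable_const.sub hOm)))).const_mul _
  have hfnn : ∀ x, 0 ≤ fst x := by
    intro x
    rw [hfst]
    by_cases h : ‖x‖ ≤ 1
    · simp only [Omega, if_pos h]
      have := hA0; rw [hA0def] at this
      positivity
    · simp only [Omega, if_neg h]
      have : (0:ℝ) ≤ ‖x‖ ^ (-α+1) := Real.rpow_nonneg (norm_nonneg x) _
      positivity
  -- the lintegral computation
  set B : ℕ → Set ℚ_[p] := fun k => Metric.closedBall 0 ((p:ℝ)^k) with hBdef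
  have hBmeas : ∀ k, MeasurableSet (B k) := fun k => measurableSet_closedBall
  have hμB : ∀ k, μ (B k) = (p:ℝ≥0∞)^k := padic_measure_ball p μ hμ
  set A : ℕ → Set ℚ_[p] := fun k => B (k+1) \ B k with hAdef
  have hAmeas : ∀ k, MeasurableSet (A k) := fun k => (hBmeas (k+1)).diff (hBmeas k)
  have hmemB : ∀ (k:ℕ) (x : ℚ_[p]), x ∈ B k ↔ ‖x‖ ≤ (p:ℝ)^k := by
    intro k x
    simp [hBdef, Metric.mem_closedBall, dist_zero_right]
  have hcompl : (B 0)ᶜ = ⋃ k, A k := by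
    ext x
    simp only [Set.mem_compl_iff, hmemB, Set.mem_iUnion, hAdef, Set.mem_diff, pow_zero]
    constructor
    · intro hx
      obtain ⟨k, h1, h2⟩ := padic_norm_gt_one p x hx
      exact ⟨k, h2, h1⟩
    · rintro ⟨k, h2, h1⟩ hc
      exact h1 (le_trans hc (one_le_pow₀ (le_of_lt hp1)))
  have hAdisj : Pairwise (Function.onFun Disjoint A) := by
    have key : ∀ k l, k < l → Disjoint (A k) (A l) := by
      intro k l hkl
      rw [Set.disjoint_left]
      rintro x ⟨hx1, -⟩ ⟨-, hx2⟩
      apply hx2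
      rw [hmemB] at hx1 ⊢
      calc ‖x‖ ≤ (p:ℝ)^(k+1) := hx1
        _ ≤ (p:ℝ)^l := pow_le_pow_right₀ (le_of_lt hp1) hkl
    intro k l hkl
    rcases hkl.lt_or_gt with h | h
    · exact key _ _ h
    · exact (key _ _ h).symm
  have hgm : Measurable (fun x => ENNReal.ofReal (fst x)) :=
    ENNReal.measurable_ofReal.comp hfm
  set r : ℝ := (p:ℝ) ^ ((2:ℝ) - α) with hrdef
  have hr0 : 0 < r := Real.rpow_pos_of_pos hp0 _
  have hr1 : r < 1 := Real.rpow_lt_one_of_one_lt_of_neg hp1 (by linarith)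
  have hrs : r = s⁻¹ := by
    rw [hrdef, hsdef, ← Real.rpow_neg (le_of_lt hp0)]
    norm_num
  -- value of fst on the annulus
  have hfstA : ∀ (k:ℕ) (x : ℚ_[p]), x ∈ A k →
      fst x = N⁻¹ * ((p:ℝ)^(k+1)) ^ (-α + 1) := by
    intro k x hx
    obtain ⟨hx1, hx2⟩ := hx
    rw [hmemB] at hx1
    have hnx : ‖x‖ = (p:ℝ)^(k+1) :=
      padic_norm_annulus p x k (fun hc => hx2 ((hmemB k x).mpr hc)) hx1
    have hgt1 : ¬ ‖x‖ ≤ 1 := by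
      push_neg
      rw [hnx]
      exact one_lt_pow₀ hp1 (Nat.succ_ne_zero k)
    have hO : Omega ‖x‖ = 0 := if_neg hgt1
    rw [hfst, hO, hnx]
    ring
  -- main lintegral
  have hlint : ∫⁻ x, ENNReal.ofReal (fst x) ∂μ = 1 := by
    rw [← lintegral_add_compl (fun x => ENNReal.ofReal (fst x)) (hBmeas 0)]
    have e1 : ∫⁻ x in B 0, ENNReal.ofReal (fst x) ∂μ = ENNReal.ofReal (N⁻¹ * A0) := by
      rw [setLIntegral_congr_fun_ae (hBmeas 0)
        (ae_of_all μ (fun x hx => ?_)), setLIntegral_const, hμB 0, pow_zero, mul_one]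
      have hx1 : ‖x‖ ≤ 1 := by
        have := (hmemB 0 x).mp hx; rwa [pow_zero] at this
      rw [hfst]
      simp only [Omega, if_pos hx1]
      norm_num
    have e2 : ∫⁻ x in (B 0)ᶜ, ENNReal.ofReal (fst x) ∂μ
        = ENNReal.ofReal (N⁻¹ * (1 - (p:ℝ)⁻¹) * (r / (1 - r))) := by
      rw [hcompl, lintegral_iUnion hAmeas hAdisj]
      have eterm : ∀ k : ℕ, ∫⁻ x in A k, ENNReal.ofReal (fst x) ∂μ
          = ENNReal.ofReal ((N⁻¹ * (1 - (p:ℝ)⁻¹)) * r^(k+1)) := by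
        intro k
        rw [setLIntegral_congr_fun_ae (hAmeas k)
          (ae_of_all μ (fun x hx => by rw [hfstA k x hx])), setLIntegral_const]
        have hμA : μ (A k) = ENNReal.ofReal ((p:ℝ)^(k+1) - (p:ℝ)^k) := by
          rw [hAdef]
          have hsub : B k ⊆ B (k+1) :=
            Metric.closedBall_subset_closedBall
              (pow_le_pow_right₀ (le_of_lt hp1) (Nat.le_succ k))
          rw [measure_diff hsub (hBmeas k).nullMeasurableSet
            (by rw [hμB k]; exact ENNReal.pow_ne_top (ENNReal.natCast_ne_top p)),
            hμB, hμB, ENNReal.ofReal_sub _ (by positivity),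
            ENNReal.ofReal_pow (by positivity), ENNReal.ofReal_pow (by positivity),
            ENNReal.ofReal_natCast]
        rw [hμA, ← ENNReal.ofReal_mul (by positivity)]
        congr 1
        -- real computation
        have hm : ((p:ℝ)^(k+1)) ^ (-α+1) = (p:ℝ) ^ (((k+1:ℕ):ℝ) * (-α+1)) := by
          rw [← Real.rpow_natCast (p:ℝ) (k+1), ← Real.rpow_mul (le_of_lt hp0)]
        have hrk : r^(k+1) = (p:ℝ) ^ (((2:ℝ) - α) * ((k+1:ℕ):ℝ)) := by
          rw [hrdef, ← Real.rpow_natCast ((p:ℝ) ^ ((2:ℝ)-α)) (k+1),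
            ← Real.rpow_mul (le_of_lt hp0)]
        have hdiff : (p:ℝ)^(k+1) - (p:ℝ)^k = (1 - (p:ℝ)⁻¹) * (p:ℝ) ^ (((k+1:ℕ):ℝ)) := by
          rw [Real.rpow_natCast, pow_succ]
          field_simp
        have hcomb : (p:ℝ)^(((k+1:ℕ):ℝ)*(-α+1)) * (p:ℝ)^(((k+1:ℕ):ℝ))
            = (p:ℝ)^(((2:ℝ)-α)*((k+1:ℕ):ℝ)) := by
          rw [← Real.rpow_add hp0]; congr 1; ring
        rw [hm, hrk, hdiff]
        calc N⁻¹ * (p:ℝ)^(((k+1:ℕ):ℝ)*(-α+1)) * ((1 - (p:ℝ)⁻¹) * (p:ℝ)^(((k+1:ℕ):ℝ)))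
            = N⁻¹ * (1 - (p:ℝ)⁻¹) *
              ((p:ℝ)^(((k+1:ℕ):ℝ)*(-α+1)) * (p:ℝ)^(((k+1:ℕ):ℝ))) := by ring
          _ = N⁻¹ * (1 - (p:ℝ)⁻¹) * (p:ℝ)^(((2:ℝ)-α)*((k+1:ℕ):ℝ)) := by rw [hcomb]
      simp_rw [eterm]
      have hc0 : 0 ≤ N⁻¹ * (1 - (p:ℝ)⁻¹) :=
        mul_nonneg (inv_nonneg.mpr (le_of_lt hN0)) (by linarith)
      rw [← ENNReal.ofReal_tsum_of_nonneg
        (fun k => mul_nonneg hc0 (pow_nonneg (le_of_lt hr0) _))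
        (by
          have : (fun k : ℕ => (N⁻¹ * (1 - (p:ℝ)⁻¹)) * r^(k+1))
              = fun k : ℕ => ((N⁻¹ * (1 - (p:ℝ)⁻¹)) * r) * r^k := by
            funext k; rw [pow_succ]; ring
          rw [this]
          exact (summable_geometric_of_lt_one (le_of_lt hr0) hr1).mul_left _)]
      congr 1
      have : (fun k : ℕ => (N⁻¹ * (1 - (p:ℝ)⁻¹)) * r^(k+1))
          = fun k : ℕ => ((N⁻¹ * (1 - (p:ℝ)⁻¹)) * r) * r^k := by
        funext k; rw [pow_succ]; ring
      rw [this, tsum_mul_left, tsum_geometric_of_lt_one (le_of_lt hr0) hr1]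
      field_simp
    have hnn1 : 0 ≤ N⁻¹ * A0 := mul_nonneg (inv_nonneg.mpr (le_of_lt hN0)) (le_of_lt hA0)
    have hnn2 : 0 ≤ N⁻¹ * (1 - (p:ℝ)⁻¹) * (r / (1 - r)) := by
      apply mul_nonneg (mul_nonneg (inv_nonneg.mpr (le_of_lt hN0)) (by linarith))
      apply div_nonneg (le_of_lt hr0); linarith
    rw [e1, e2, ← ENNReal.ofReal_add hnn1 hnn2]
    rw [show N⁻¹ * A0 + N⁻¹ * (1 - (p:ℝ)⁻¹) * (r / (1 - r)) = 1 from ?_]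
    · exact ENNReal.ofReal_one
    have hrr : r / (1 - r) = 1 / (s - 1) := by
      rw [hrs]
      have hsne : s ≠ 0 := by linarith
      have h1 : 1 - s⁻¹ = (s - 1) / s := by field_simp
      rw [h1]
      field_simp
    rw [hrr]
    have hNne : N ≠ 0 := ne_of_gt hN0
    have : N⁻¹ * A0 + N⁻¹ * (1 - (p:ℝ)⁻¹) * (1 / (s-1))
        = N⁻¹ * (A0 + (1 - (p:ℝ)⁻¹)/(s-1)) := by ring
    rw [this, ← hN, inv_mul_cancel₀ hNne]
  -- assemble part (i)
  have hint : Integrable fst μ := by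
    refine ⟨hfm.aestronglyMeasurable, ?_⟩
    rw [hasFiniteIntegral_iff_ofReal (ae_of_all μ hfnn), hlint]
    exact ENNReal.one_lt_top
  have hival : ∫ x, fst x ∂μ = 1 := by
    rw [integral_eq_lintegral_of_nonneg_ae (ae_of_all μ hfnn) hfm.aestronglyMeasurable,
      hlint, ENNReal.toReal_one]
  refine ⟨⟨hint, hival⟩, fun x => ?_⟩
  have hzero : (fun y : ℚ_[p] => (u y * fst y - u x * fst x) / ‖x - y‖ ^ (α + 1))
      = fun _ => (0:ℝ) := by
    funext y
    rw [hconst y, hconst x, sub_self, zero_div]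
  rw [hzero]
  exact ⟨integrable_zero _ _ _, integral_zero _ _⟩
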